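/- Assume (H1)–(H5). Let C > 0, 0 < η < η₀, 0 < ε ≤ 1, and let v ∈ V satisfy I^ε(v) ≤ C. Then there exists a constant c > 0, depending only on C and on the data of W, such that ∫_{Σ^η} |v′(x)| dx ≤ c (ε² η^{−q} + ε²), where Σ^η = {x ∈ (0,1) : |v′(x) − z_k| > η for all k = 1,2,3}. -/

import Mathlib

open MeasureTheory Set Filter

/-- `u ∈ V = H²(0,1) ∩ W^{1,p}₀(0,1)`, represented through its first and second
derivatives `u'`, `u''`: `u(0) = u(1) = 0`, `u` and `u'` are absolutely continuous on
`[0,1]`, `u' ∈ L^p(0,1)` and `u'' ∈ L²(0,1)`. -/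
def MemV (p : ℝ) (u u' u'' : ℝ → ℝ) : Prop :=
  u 0 = 0 ∧ u 1 = 0 ∧
  (∀ x ∈ Set.Icc (0:ℝ) 1, u x = ∫ t in (0:ℝ)..x, u' t) ∧
  (∀ x ∈ Set.Icc (0:ℝ) 1, u' x = u' 0 + ∫ t in (0:ℝ)..x, u'' t) ∧
  IntervalIntegrable u' volume 0 1 ∧
  IntervalIntegrable u'' volume 0 1 ∧
  IntervalIntegrable (fun x => |u' x| ^ p) volume 0 1 ∧
  IntervalIntegrable (fun x => (u'' x) ^ 2) volume 0 1

/-- The rescaled energy `I^ε(u) = ∫₀¹ (ε⁴ u''² + ε⁻² W(u') + ε⁻² u²) dx`. -/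
noncomputable def Ieps (W : ℝ → ℝ) (ε : ℝ) (u u' u'' : ℝ → ℝ) : ℝ :=
  ∫ x in (0:ℝ)..1,
    (ε ^ 4 * (u'' x) ^ 2 + (ε ^ 2)⁻¹ * W (u' x) + (ε ^ 2)⁻¹ * (u x) ^ 2)

/-- Hypotheses (H1)–(H5) on the three–well potential `W`. -/
structure HypW (W : ℝ → ℝ) (p q c₀ c₁ c₂ c₃ η₀ z₁ z₂ z₃ : ℝ) : Prop where
  cont : Continuous W
  nonneg : ∀ s, 0 ≤ W s
  hp : 1 < p
  hc₁ : 0 < c₁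
  hc₂ : 0 < c₂
  hc₃ : 0 < c₃
  lb : ∀ s, c₁ * |s| ^ p - c₂ ≤ W s
  ub : ∀ s, W s ≤ c₃ * (|s| ^ p + 1)
  hz₁ : z₁ < 0
  hz₂ : 0 < z₂
  hz₂₃ : z₂ < z₃
  zeroSet : ∀ s, W s = 0 ↔ (s = z₁ ∨ s = z₂ ∨ s = z₃)
  hη₀pos : 0 < η₀
  hη₀lt : η₀ < min 1 (min (-z₁) (min z₂ ((z₃ - z₂) / 2)))
  hc₀ : 0 < c₀
  hq : 0 < q
  coer : ∀ s,
    c₀ * min (min (|s - z₁| ^ q) (min (|s - z₂| ^ q) (|s - z₃| ^ q))) (η₀ ^ q) ≤ W s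

/-- The volume fraction `λ^η(v)` at the well `z`:
the Lebesgue measure of `{x ∈ (0,1) : |v'(x) − z| ≤ η}`. -/
noncomputable def lamEta (v' : ℝ → ℝ) (z η : ℝ) : ℝ :=
  (volume {x : ℝ | x ∈ Set.Ioo (0:ℝ) 1 ∧ |v' x - z| ≤ η}).toReal

/-- `E₀`-type constant: `2∫_{a}^{b} √(W(s)) ds`. -/
noncomputable def cE (W : ℝ → ℝ) (a b : ℝ) : ℝ := 2 * ∫ s in a..b, Real.sqrt (W s)

/-- The constant `A₀ = (3/2)^{2/3} E₀^{2/3} (z₂² z₂₁)^{1/3}`. -/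
noncomputable def cA₀ (W : ℝ → ℝ) (z₁ z₂ : ℝ) : ℝ :=
  (3/2 : ℝ) ^ ((2:ℝ)/3) * (cE W z₁ z₂) ^ ((2:ℝ)/3) * (z₂ ^ 2 * (1 - z₂ / z₁)) ^ ((1:ℝ)/3)

/-- The constant `B₀ = (3/2)^{2/3} (E₀+E₁)^{2/3} (z₃² z₃₁)^{1/3}`. -/
noncomputable def cB₀ (W : ℝ → ℝ) (z₁ z₂ z₃ : ℝ) : ℝ :=
  (3/2 : ℝ) ^ ((2:ℝ)/3) * (cE W z₁ z₂ + cE W z₂ z₃) ^ ((2:ℝ)/3) *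
    (z₃ ^ 2 * (1 - z₃ / z₁)) ^ ((1:ℝ)/3)

private lemma primitive_contOn (f : ℝ → ℝ) (h : IntervalIntegrable f volume 0 1) :
    ContinuousOn (fun b => ∫ x in (0:ℝ)..b, f x) (Icc 0 1) := by
  have := intervalIntegral.continuousOn_primitive_interval' h (a := 0) (by simp)
  rwa [uIcc_of_le (by norm_num : (0:ℝ) ≤ 1)] at this

/-- The `L¹`-norm of `v'` on the bad set `Σ^η` is at most `c(ε² η^{−q} + ε²)`, with `c`
depending only on `C` and the data of `W`. -/
theorem statement6
    (W : ℝ → ℝ) (p q c₀ c₁ c₂ c₃ η₀ z₁ z₂ z₃ : ℝ)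
    (hW : HypW W p q c₀ c₁ c₂ c₃ η₀ z₁ z₂ z₃)
    (C : ℝ) (hC : 0 < C) :
    ∃ c : ℝ, 0 < c ∧
      ∀ η ε : ℝ, ∀ v v' v'' : ℝ → ℝ,
        0 < η → η < η₀ → 0 < ε → ε ≤ 1 →
        MemV p v v' v'' → Ieps W ε v v' v'' ≤ C →
        (∫ x in {x : ℝ | x ∈ Set.Ioo (0:ℝ) 1 ∧
            η < |v' x - z₁| ∧ η < |v' x - z₂| ∧ η < |v' x - z₃|}, |v' x|)
          ≤ c * (ε ^ 2 * η ^ (-q) + ε ^ 2) := by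
  have hp := hW.hp
  have hc₁ := hW.hc₁
  have hc₂ := hW.hc₂
  have hc₀ := hW.hc₀
  have hq := hW.hq
  set R : ℝ := max 1 ((2 * c₂ / c₁) ^ ((1:ℝ)/p)) with hRdef
  have hR1 : (1:ℝ) ≤ R := le_max_left _ _
  have hR0 : (0:ℝ) < R := lt_of_lt_of_le one_pos hR1
  refine ⟨R * C / c₀ + 2 * C / c₁, by positivity, ?_⟩
  intro η ε v v' v'' hη hηη₀ hε hε1 hv hIv
  obtain ⟨hv0, hv1, hveq, hv'eq, hIv', hIv'', hIv'p, hIv''2⟩ := hv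
  have h01 : (0:ℝ) ≤ 1 := by norm_num
  -- continuity of v' and v on [0,1]
  have hv'cont : ContinuousOn v' (Icc 0 1) :=
    (continuousOn_const.add (primitive_contOn v'' hIv'')).congr hv'eq
  have hvcont : ContinuousOn v (Icc 0 1) :=
    (primitive_contOn v' hIv').congr hveq
  have hε2 : (0:ℝ) < ε ^ 2 := by positivity
  -- integrability of the three energy pieces
  have hWv'cont : ContinuousOn (fun x => W (v' x)) (Icc 0 1) :=
    hW.cont.comp_continuousOn hv'cont
  have hWint : IntervalIntegrable (fun x => W (v' x)) volume 0 1 := by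
    apply ContinuousOn.intervalIntegrable
    rwa [uIcc_of_le h01]
  have h1 : IntervalIntegrable (fun x => ε ^ 4 * (v'' x) ^ 2) volume 0 1 :=
    hIv''2.const_mul _
  have h2 : IntervalIntegrable (fun x => (ε ^ 2)⁻¹ * W (v' x)) volume 0 1 :=
    hWint.const_mul _
  have h3 : IntervalIntegrable (fun x => (ε ^ 2)⁻¹ * (v x) ^ 2) volume 0 1 := by
    apply IntervalIntegrable.const_mul
    apply ContinuousOn.intervalIntegrable
    rw [uIcc_of_le h01]
    exact hvcont.pow 2
  -- step 1 : ∫₀¹ W(v') ≤ C ε²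
  have hsplit : Ieps W ε v v' v'' =
      (∫ x in (0:ℝ)..1, ε ^ 4 * (v'' x) ^ 2) +
      (∫ x in (0:ℝ)..1, (ε ^ 2)⁻¹ * W (v' x)) +
      (∫ x in (0:ℝ)..1, (ε ^ 2)⁻¹ * (v x) ^ 2) := by
    unfold Ieps
    rw [intervalIntegral.integral_add (h1.add h2) h3, intervalIntegral.integral_add h1 h2]
  have hnn1 : 0 ≤ ∫ x in (0:ℝ)..1, ε ^ 4 * (v'' x) ^ 2 :=
    intervalIntegral.integral_nonneg h01 (fun x _ => by positivity)
  have hnn3 : 0 ≤ ∫ x in (0:ℝ)..1, (ε ^ 2)⁻¹ * (v x) ^ 2 :=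
    intervalIntegral.integral_nonneg h01 (fun x _ => by positivity)
  have hW01 : ∫ x in (0:ℝ)..1, W (v' x) ≤ C * ε ^ 2 := by
    have h2le : ∫ x in (0:ℝ)..1, (ε ^ 2)⁻¹ * W (v' x) ≤ C := by linarith [hsplit ▸ hIv]
    rw [intervalIntegral.integral_const_mul] at h2le
    rw [inv_mul_le_iff₀ hε2] at h2le
    linarith [h2le]
  -- the bad set
  set S : Set ℝ := {x : ℝ | x ∈ Set.Ioo (0:ℝ) 1 ∧
      η < |v' x - z₁| ∧ η < |v' x - z₂| ∧ η < |v' x - z₃|} with hSdef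
  have hSsub : S ⊆ Ioo 0 1 := fun x hx => hx.1
  have hSopen : IsOpen S := by
    have h : ∀ z : ℝ, IsOpen {y : ℝ | η < |y - z|} := fun z =>
      isOpen_lt continuous_const (continuous_abs.comp (continuous_sub_right z))
    have hU : IsOpen {y : ℝ | η < |y - z₁| ∧ η < |y - z₂| ∧ η < |y - z₃|} :=
      (h z₁).and ((h z₂).and (h z₃))
    have hcv : ContinuousOn v' (Ioo 0 1) := hv'cont.mono Ioo_subset_Icc_self
    have hSeq : S = Ioo 0 1 ∩ v' ⁻¹'
        {y : ℝ | η < |y - z₁| ∧ η < |y - z₂| ∧ η < |y - z₃|} := rfl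
    rw [hSeq]
    exact hcv.isOpen_inter_preimage isOpen_Ioo hU
  have hSmeas : MeasurableSet S := hSopen.measurableSet
  have hSfin : volume S ≠ ⊤ :=
    (lt_of_le_of_lt (measure_mono hSsub) measure_Ioo_lt_top).ne
  -- integrability on Ioo and S
  have hWIoo : IntegrableOn (fun x => W (v' x)) (Ioo 0 1) volume :=
    hWint.1.mono_set Ioo_subset_Ioc_self
  have hWS : IntegrableOn (fun x => W (v' x)) S volume := hWIoo.mono_set hSsub
  have habsS : IntegrableOn (fun x => |v' x|) S volume :=
    (hIv'.1.mono_set (hSsub.trans Ioo_subset_Ioc_self)).abs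
  -- ∫_S W ≤ C ε²
  have hIooeq : ∫ x in Ioo (0:ℝ) 1, W (v' x) = ∫ x in (0:ℝ)..1, W (v' x) := by
    rw [intervalIntegral.integral_of_le h01, integral_Ioc_eq_integral_Ioo]
  have hWSle : ∫ x in S, W (v' x) ≤ C * ε ^ 2 := by
    calc ∫ x in S, W (v' x)
        ≤ ∫ x in Ioo (0:ℝ) 1, W (v' x) :=
          setIntegral_mono_set hWIoo (Eventually.of_forall fun x => hW.nonneg _)
            (HasSubset.Subset.eventuallyLE hSsub)
      _ = ∫ x in (0:ℝ)..1, W (v' x) := hIooeq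
      _ ≤ C * ε ^ 2 := hW01
  -- lower bound of W on S
  have hηq : (0:ℝ) < η ^ q := Real.rpow_pos_of_pos hη q
  have hWlow : ∀ x ∈ S, c₀ * η ^ q ≤ W (v' x) := by
    intro x hx
    obtain ⟨-, hx1, hx2, hx3⟩ := hx
    refine le_trans ?_ (hW.coer (v' x))
    have key : ∀ z : ℝ, η < |v' x - z| → η ^ q ≤ |v' x - z| ^ q := fun z h =>
      Real.rpow_le_rpow hη.le h.le hq.le
    have hη₀q : η ^ q ≤ η₀ ^ q := Real.rpow_le_rpow hη.le hηη₀.le hq.le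
    exact mul_le_mul_of_nonneg_left
      (le_min (le_min (key _ hx1) (le_min (key _ hx2) (key _ hx3))) hη₀q) hc₀.le
  -- measure bound
  have hμbound : (volume S).toReal ≤ C / c₀ * (ε ^ 2 * (η ^ q)⁻¹) := by
    have hμ : c₀ * η ^ q * (volume S).toReal ≤ C * ε ^ 2 :=
      le_trans (setIntegral_ge_of_const_le_real hSmeas hSfin hWlow hWS) hWSle
    rw [← le_div_iff₀' (by positivity)] at hμ
    calc (volume S).toReal ≤ C * ε ^ 2 / (c₀ * η ^ q) := hμ
      _ = C / c₀ * (ε ^ 2 * (η ^ q)⁻¹) := by field_simp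
  -- pointwise bound |s| ≤ R + (2/c₁) W s
  have hpt : ∀ s : ℝ, |s| ≤ R + 2 / c₁ * W s := by
    intro s
    have hWs := hW.nonneg s
    rcases le_or_gt |s| R with h | h
    · have : 0 ≤ 2 / c₁ * W s := by positivity
      linarith
    · have h1s : (1:ℝ) ≤ |s| := le_trans hR1 h.le
      have h2s : (2 * c₂ / c₁) ^ ((1:ℝ)/p) ≤ |s| := le_trans (le_max_right _ _) h.le
      have hpne : p ≠ 0 := by positivity
      have h3s : 2 * c₂ / c₁ ≤ |s| ^ p := by
        have := Real.rpow_le_rpow (Real.rpow_nonneg (by positivity) _) h2s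
          (le_of_lt (lt_trans one_pos hp))
        rwa [← Real.rpow_mul (by positivity), one_div, inv_mul_cancel₀ hpne,
          Real.rpow_one] at this
      have h4s : |s| ≤ |s| ^ p := by
        nth_rewrite 1 [← Real.rpow_one |s|]
        exact Real.rpow_le_rpow_of_exponent_le h1s hp.le
      have h5s : c₁ * |s| ^ p - c₂ ≤ W s := hW.lb s
      have h6s : 2 * c₂ ≤ c₁ * |s| ^ p := by
        calc 2 * c₂ = c₁ * (2 * c₂ / c₁) := by field_simp
          _ ≤ c₁ * |s| ^ p := mul_le_mul_of_nonneg_left h3s hc₁.le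
      have h8s : c₁ * |s| ≤ c₁ * |s| ^ p := mul_le_mul_of_nonneg_left h4s hc₁.le
      have h9s : |s| ≤ 2 / c₁ * W s := by
        rw [div_mul_eq_mul_div, le_div_iff₀ hc₁]
        nlinarith
      linarith
  -- conclusion
  have hconst : IntegrableOn (fun _ : ℝ => R) S volume :=
    integrableOn_const hSfin
  calc ∫ x in S, |v' x|
      ≤ ∫ x in S, (R + 2 / c₁ * W (v' x)) :=
        setIntegral_mono_on habsS (hconst.add (hWS.const_mul _)) hSmeas
          (fun x _ => hpt (v' x))
    _ = R * (volume S).toReal + 2 / c₁ * ∫ x in S, W (v' x) := by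
        rw [integral_add hconst (hWS.const_mul _), setIntegral_const,
          integral_const_mul, smul_eq_mul, mul_comm]
        rfl
    _ ≤ R * (C / c₀ * (ε ^ 2 * (η ^ q)⁻¹)) + 2 / c₁ * (C * ε ^ 2) := by
        gcongr
    _ ≤ (R * C / c₀ + 2 * C / c₁) * (ε ^ 2 * η ^ (-q) + ε ^ 2) := by
        rw [Real.rpow_neg hη.le]
        have hA : 0 ≤ R * C / c₀ := by positivity
        have hB : 0 ≤ 2 * C / c₁ := by positivity
        have hx : 0 ≤ ε ^ 2 * (η ^ q)⁻¹ := by positivity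
        have e1 : R * (C / c₀ * (ε ^ 2 * (η ^ q)⁻¹)) = R * C / c₀ * (ε ^ 2 * (η ^ q)⁻¹) := by
          ring
        have e2 : 2 / c₁ * (C * ε ^ 2) = 2 * C / c₁ * ε ^ 2 := by ring
        rw [e1, e2]
        nlinarith [mul_nonneg hA hε2.le, mul_nonneg hB hx]
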